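/- Let B, X be basic hoops, let (f, g) be a strong external action of B on X, and let Y' = {(x, b) ∈ X × B | f_b(x) = x} be the associated hoop with operations (x, b) → (y, b') = (g_{b'→b}(x → y), b → b') and (x, b) · (y, b') = (f_{b·b'}(x · y), b · b'). Then for all (x, b), (y, b') ∈ Y': (x, b) · ((x, b) → (y, b')) = (f_{b∧b'}(x ∧ y), b ∧ b'), and (((x, b) → (y, b')) → (y, b')) ∧ (((y, b') → (x, b)) → (x, b)) = (f_{b∨b'}((g_{b'→b}(x → y) → y) ∧ (g_{b→b'}(y → x) → x)), b ∨ b'), where in any hoop u ∧ v := u · (u → v) and in a basic hoop u ∨ v := ((u → v) → v) ∧ ((v → u) → u). -/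
import Mathlib


class Hoop (α : Type*) extends CommMonoid α, HImp α where
  himp_self : ∀ x : α, x ⇨ x = 1
  mul_himp_comm : ∀ x y : α, x * (x ⇨ y) = y * (y ⇨ x)
  mul_himp_assoc : ∀ x y z : α, (x * y) ⇨ z = x ⇨ (y ⇨ z)

/-- A basic hoop: a hoop satisfying `((x → y) → z) → (((y → x) → z) → z) = 1`. -/
class BasicHoop (α : Type*) extends Hoop α where
  basic : ∀ x y z : α, ((x ⇨ y) ⇨ z) ⇨ (((y ⇨ x) ⇨ z) ⇨ z) = 1

/-- The meet `u ∧ v := u · (u → v)` of a hoop. -/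
def hmeet {α : Type*} [Hoop α] (x y : α) : α := x * (x ⇨ y)

/-- The join `u ∨ v := ((u → v) → v) ∧ ((v → u) → u)` of a basic hoop. -/
def hjoin {α : Type*} [Hoop α] (x y : α) : α :=
  hmeet ((x ⇨ y) ⇨ y) ((y ⇨ x) ⇨ x)

/-- The multiplication of the semidirect product of a strong external action. -/
def Amul {B X : Type*} [Hoop B] [Hoop X] (f : B → X → X) (q r : X × B) : X × B :=
  (f (q.2 * r.2) (q.1 * r.1), q.2 * r.2)

/-- The implication of the semidirect product of a strong external action. -/
def Aimp {B X : Type*} [Hoop B] [Hoop X] (g : B → X → X) (q r : X × B) : X × B :=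
  (g (r.2 ⇨ q.2) (q.1 ⇨ r.1), q.2 ⇨ r.2)

/-- The meet `u ∧ v := u · (u → v)` of the semidirect product hoop. -/
def Ameet {B X : Type*} [Hoop B] [Hoop X] (f g : B → X → X) (q r : X × B) : X × B :=
  Amul f q (Aimp g q r)

/-- The join `u ∨ v := ((u → v) → v) ∧ ((v → u) → u)` of the semidirect product hoop. -/
def Ajoin {B X : Type*} [Hoop B] [Hoop X] (f g : B → X → X) (q r : X × B) : X × B :=
  Ameet f g (Aimp g (Aimp g q r) r) (Aimp g (Aimp g r q) q)

section HoopLemmas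
variable {α : Type*} [Hoop α]

lemma hoop_one_himp_himp (y z : α) : (1 : α) ⇨ (y ⇨ z) = y ⇨ z := by
  have h := Hoop.mul_himp_assoc (1 : α) y z
  simpa using h.symm

lemma hoop_himp_himp_self (x y : α) : x ⇨ (y ⇨ x) = y ⇨ 1 := by
  calc x ⇨ (y ⇨ x) = (x * y) ⇨ x := (Hoop.mul_himp_assoc x y x).symm
    _ = (y * x) ⇨ x := by rw [mul_comm]
    _ = y ⇨ (x ⇨ x) := Hoop.mul_himp_assoc y x x
    _ = y ⇨ 1 := by rw [Hoop.himp_self]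

lemma hoop_one_himp (x : α) : (1 : α) ⇨ x = x := by
  have h1 : x * (x ⇨ 1) = 1 ⇨ x := by
    have := Hoop.mul_himp_comm x (1 : α); simpa using this
  have hts : (x ⇨ 1) * ((x ⇨ 1) ⇨ 1) = x ⇨ 1 := by
    have := Hoop.mul_himp_comm (x ⇨ (1 : α)) 1
    simpa [hoop_one_himp_himp] using this
  have hex : ((1 : α) ⇨ x) ⇨ x = (x ⇨ 1) ⇨ 1 := by
    rw [← h1]
    calc (x * (x ⇨ 1)) ⇨ x = x ⇨ ((x ⇨ 1) ⇨ x) := Hoop.mul_himp_assoc _ _ _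
      _ = (x ⇨ 1) ⇨ 1 := hoop_himp_himp_self x (x ⇨ 1)
  have hxe : x ⇨ ((1 : α) ⇨ x) = 1 := by
    rw [hoop_himp_himp_self x 1, Hoop.himp_self]
  have hx : ((1 : α) ⇨ x) * (((1 : α) ⇨ x) ⇨ x) = x := by
    have := Hoop.mul_himp_comm ((1 : α) ⇨ x) x
    rw [hxe, mul_one] at this
    exact this
  have hkey : ((1 : α) ⇨ x) * (((1 : α) ⇨ x) ⇨ x) = x * (x ⇨ 1) := by
    rw [hex, ← h1, mul_assoc, hts]
  calc (1 : α) ⇨ x = x * (x ⇨ 1) := h1.symm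
    _ = x := by rw [← hkey, hx]

lemma hoop_mul_himp_one (x : α) : x * (x ⇨ 1) = x := by
  have h1 : x * (x ⇨ 1) = 1 ⇨ x := by
    have := Hoop.mul_himp_comm x (1 : α); simpa using this
  rw [h1, hoop_one_himp]

lemma hoop_himp_one (x : α) : x ⇨ (1 : α) = 1 := by
  calc x ⇨ (1 : α) = (x * (x ⇨ 1)) ⇨ 1 := by rw [hoop_mul_himp_one]
    _ = ((x ⇨ 1) * x) ⇨ 1 := by rw [mul_comm]
    _ = (x ⇨ 1) ⇨ (x ⇨ 1) := Hoop.mul_himp_assoc _ _ _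
    _ = 1 := Hoop.himp_self _

lemma hoop_himp_himp_right (a c : α) : c ⇨ (a ⇨ c) = 1 := by
  rw [hoop_himp_himp_self, hoop_himp_one]

end HoopLemmas

/-- The meet formula for the semidirect product, for arbitrary pairs. -/
lemma Ameet_eq {B X : Type*} [Hoop B] [Hoop X] (f g : B → X → X)
    (E3 : ∀ (b₁ b₂ : B) (x y : X),
      f (b₁ * b₂) (x * g b₁ (x ⇨ y)) = f (b₁ * b₂) (x * (x ⇨ y)))
    (s t : X) (e e' : B) :
    Ameet f g (s, e) (t, e') = (f (hmeet e e') (hmeet s t), hmeet e e') := by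
  have hb : (e' ⇨ e) * e' = hmeet e e' := by
    rw [mul_comm, hmeet, ← Hoop.mul_himp_comm]
  have h := E3 (e' ⇨ e) e' s t
  rw [hb] at h
  simp only [Ameet, Amul, Aimp, hmeet]
  exact Prod.ext h rfl

/-- For a strong external action `(f,g)` of a basic hoop `B` on a basic hoop `X`, the
lattice operations of the semidirect product `Y' = {(x,b) | f_b(x) = x}` are given by
`(x,b) ∧ (y,b') = (f_{b∧b'}(x ∧ y), b ∧ b')` and
`(x,b) ∨ (y,b') = (f_{b∨b'}((g_{b'→b}(x → y) → y) ∧ (g_{b→b'}(y → x) → x)), b ∨ b')`. -/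
theorem stmt9 {B X : Type*} [BasicHoop B] [BasicHoop X] (f g : B → X → X)
    (E1f : ∀ b : B, f b 1 = 1) (E1g : ∀ b : B, g b 1 = 1)
    (E2f : ∀ x : X, f 1 x = x) (E2g : ∀ x : X, g 1 x = x)
    (E3 : ∀ (b₁ b₂ : B) (x y : X),
      f (b₁ * b₂) (x * g b₁ (x ⇨ y)) = f (b₁ * b₂) (x * (x ⇨ y)))
    (E4 : ∀ (b₁ b₂ b₃ : B) (x y z : X),
      g (b₃ ⇨ (b₁ * b₂)) (f (b₁ * b₂) (x * y) ⇨ z)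
        = g ((b₂ ⇨ b₃) ⇨ b₁) (x ⇨ g (b₃ ⇨ b₂) (y ⇨ z)))
    (x y : X) (b b' : B)
    (hq : f b x = x) (hr : f b' y = y) :
    Ameet f g (x, b) (y, b') = (f (hmeet b b') (hmeet x y), hmeet b b') ∧
    Ajoin f g (x, b) (y, b')
      = (f (hjoin b b') (hmeet (g (b' ⇨ b) (x ⇨ y) ⇨ y) (g (b ⇨ b') (y ⇨ x) ⇨ x)),
          hjoin b b') := by
  
  have key : ∀ (s t : X) (e e' : B),
      Ameet f g (s, e) (t, e') = (f (hmeet e e') (hmeet s t), hmeet e e') :=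
    Ameet_eq f g E3
  constructor
  · exact key x y b b'
  · have h1 : Aimp g (Aimp g (x, b) (y, b')) (y, b')
        = ((g (b' ⇨ b) (x ⇨ y) ⇨ y, (b ⇨ b') ⇨ b') : X × B) := by
      simp only [Aimp]
      rw [hoop_himp_himp_right, E2g]
    have h2 : Aimp g (Aimp g (y, b') (x, b)) (x, b)
        = ((g (b ⇨ b') (y ⇨ x) ⇨ x, (b' ⇨ b) ⇨ b) : X × B) := by
      simp only [Aimp]
      rw [hoop_himp_himp_right, E2g]
    rw [Ajoin, h1, h2, key]
    rfl
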